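/- Let Ω ⊂ ℝ³ be a smooth bounded domain, τ > 0, and b ∈ ℝ. Let B : ℝ → ℝ be nondecreasing with B(0) = 0 and B(r) > 0 for every r > 0. Let w ∈ L²(Ω) with w ≤ b a.e. in Ω, let v ∈ H¹(Ω) be such that B((v − w)/τ) ∈ L²(Ω), and let f ∈ L²(Ω) with f ≤ 0 a.e. on the set {x ∈ Ω : v(x) > b}. Assume that v is a weak solution of the Neumann problem B((v − w)/τ) − Δv = f, i.e., ∫_Ω B((v − w)/τ) φ + ∫_Ω ∇v·∇φ = ∫_Ω f φ for every φ ∈ H¹(Ω). Then v ≤ b a.e. in Ω. -/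

import Mathlib

open MeasureTheory Filter Topology Set

lemma memL2_integrable_mul {α : Type*} [MeasurableSpace α] {μ : Measure α}
    {f g : α → ℝ} (hf : MemLp f 2 μ) (hg : MemLp g 2 μ) :
    Integrable (fun x => f x * g x) μ := by
  have h1 : Integrable (fun x => (f x + g x) ^ 2) μ := (hf.add hg).integrable_sq
  have h2 : Integrable (fun x => f x ^ 2) μ := hf.integrable_sq
  have h3 : Integrable (fun x => g x ^ 2) μ := hg.integrable_sq
  have : (fun x => f x * g x)
      = fun x => ((f x + g x) ^ 2 - f x ^ 2 - g x ^ 2) / 2 := by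
    funext x; ring
  rw [this]
  exact ((h1.sub h2).sub h3).div_const 2

theorem rothe_step_maximum_principle
    (Ω : Set (EuclideanSpace ℝ (Fin 3)))
    (hΩopen : IsOpen Ω) (hΩbdd : Bornology.IsBounded Ω)
    (τ : ℝ) (hτ : 0 < τ) (b : ℝ)
    (B : ℝ → ℝ) (hBmono : Monotone B) (hB0 : B 0 = 0)
    (hBpos : ∀ r : ℝ, 0 < r → 0 < B r)
    -- the abstract Sobolev space `H¹(Ω)`: pairs (function, weak gradient)
    (Sob : Set ((EuclideanSpace ℝ (Fin 3) → ℝ) × (EuclideanSpace ℝ (Fin 3) → EuclideanSpace ℝ (Fin 3))))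
    (hSobL2 : ∀ p ∈ Sob, MemLp p.1 2 (volume.restrict Ω) ∧ MemLp p.2 2 (volume.restrict Ω))
    (w : EuclideanSpace ℝ (Fin 3) → ℝ)
    (hwL2 : MemLp w 2 (volume.restrict Ω))
    (hwb : ∀ᵐ x ∂(volume.restrict Ω), w x ≤ b)
    (v : EuclideanSpace ℝ (Fin 3) → ℝ)
    (gv : EuclideanSpace ℝ (Fin 3) → EuclideanSpace ℝ (Fin 3))
    (hv : (v, gv) ∈ Sob)
    (hBvL2 : MemLp (fun x => B ((v x - w x) / τ)) 2 (volume.restrict Ω))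
    -- `H¹(Ω)` is stable under the truncation `v ↦ (v − b)⁺`
    (htrunc : ((fun x => max (v x - b) 0),
               (fun x => if b < v x then gv x else 0)) ∈ Sob)
    (f : EuclideanSpace ℝ (Fin 3) → ℝ)
    (hfL2 : MemLp f 2 (volume.restrict Ω))
    (hfneg : ∀ᵐ x ∂(volume.restrict Ω), b < v x → f x ≤ 0)
    -- weak formulation of `B((v − w)/τ) − Δv = f`, `∂_n v = 0 on ∂Ω`
    (hweak : ∀ p ∈ Sob,
      (∫ x, B ((v x - w x) / τ) * p.1 x ∂(volume.restrict Ω)) +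
      (∫ x, (inner ℝ (gv x) (p.2 x) : ℝ) ∂(volume.restrict Ω)) =
      ∫ x, f x * p.1 x ∂(volume.restrict Ω)) :
    ∀ᵐ x ∂(volume.restrict Ω), v x ≤ b := by
  set μ := volume.restrict Ω with hμ
  set φ : EuclideanSpace ℝ (Fin 3) → ℝ := fun x => max (v x - b) 0 with hφdef
  have hφL2 : MemLp φ 2 μ := (hSobL2 _ htrunc).1
  have hkey := hweak _ htrunc
  -- the gradient term is nonnegative
  have hinner : 0 ≤ ∫ x, (inner ℝ (gv x) ((if b < v x then gv x else 0)) : ℝ) ∂μ := by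
    apply integral_nonneg
    intro x
    by_cases h : b < v x
    · simp only [h, if_true]
      exact real_inner_self_nonneg
    · simp [h]
  -- the right-hand side is nonpositive
  have hrhs : (∫ x, f x * φ x ∂μ) ≤ 0 := by
    apply integral_nonpos_of_ae
    filter_upwards [hfneg] with x hx
    by_cases h : b < v x
    · exact mul_nonpos_of_nonpos_of_nonneg (hx h) (le_max_right _ _)
    · have : φ x = 0 := by
        simp only [hφdef, max_eq_right_iff]
        linarith [not_lt.mp h]
      simp [this]
  -- hence the B term is nonpositive
  have hBle : (∫ x, B ((v x - w x) / τ) * φ x ∂μ) ≤ 0 := by linarith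
  -- the B term integrand is nonnegative a.e.
  have hBnn : 0 ≤ᵐ[μ] fun x => B ((v x - w x) / τ) * φ x := by
    filter_upwards [hwb] with x hw
    by_cases h : b < v x
    · have h1 : 0 < (v x - w x) / τ := by
        apply div_pos _ hτ; linarith
      exact le_of_lt (mul_pos (hBpos _ h1) (by simp [hφdef]; linarith))
    · have : φ x = 0 := by
        simp only [hφdef, max_eq_right_iff]
        linarith [not_lt.mp h]
      simp [this]
  have hint : Integrable (fun x => B ((v x - w x) / τ) * φ x) μ :=
    memL2_integrable_mul hBvL2 hφL2
  have hzero : (∫ x, B ((v x - w x) / τ) * φ x ∂μ) = 0 :=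
    le_antisymm hBle (integral_nonneg_of_ae hBnn)
  have hae : (fun x => B ((v x - w x) / τ) * φ x) =ᵐ[μ] 0 :=
    (integral_eq_zero_iff_of_nonneg_ae hBnn hint).mp hzero
  filter_upwards [hae, hwb] with x h0 hw
  by_contra h
  push_neg at h
  have h1 : 0 < (v x - w x) / τ := by
    apply div_pos _ hτ; linarith
  have h2 : 0 < φ x := by simp [hφdef]; linarith
  have := mul_pos (hBpos _ h1) h2
  simp only [Pi.zero_apply] at h0
  linarith
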